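/- Let k be a positive integer, μ > 0, and λ satisfy 0 < λ < μk. Then there exists a unique y > 0 satisfying y − λ = ( (y/μ)^k / k! ) / ( Σ_{i=0}^{k} (y/μ)^i / i! ) · y, and moreover this unique solution satisfies y > λ. Consequently the rejection rate x = y − λ is unique and positive. -/

import Mathlib

open Finset

noncomputable def Psum (n : ℕ) (a : ℝ) : ℝ := ∑ i ∈ range n, a ^ i / (Nat.factorial i : ℝ)

lemma one_le_Psum (n : ℕ) {a : ℝ} (ha : 0 ≤ a) : 1 ≤ Psum (n + 1) a := by
  unfold Psum
  have := Finset.single_le_sum (f := fun i => a ^ i / (Nat.factorial i : ℝ))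
    (fun i _ => by positivity) (mem_range.mpr (Nat.succ_pos n))
  simpa using this

lemma Psum_pos (n : ℕ) {a : ℝ} (ha : 0 ≤ a) : 0 < Psum (n + 1) a :=
  lt_of_lt_of_le one_pos (one_le_Psum n ha)

lemma Psum_succ (n : ℕ) (a : ℝ) :
    Psum (n + 1) a = Psum n a + a ^ n / (Nat.factorial n : ℝ) := by
  unfold Psum; exact Finset.sum_range_succ _ n

lemma continuous_Psum (n : ℕ) : Continuous (Psum n) := by
  unfold Psum; fun_prop

lemma hasDerivAt_Psum (n : ℕ) (a : ℝ) :
    HasDerivAt (fun x => Psum (n + 1) x) (Psum n a) a := by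
  have h : HasDerivAt (fun x : ℝ => Psum (n + 1) x)
      (∑ i ∈ range (n + 1), (i : ℝ) * a ^ (i - 1) / (Nat.factorial i : ℝ)) a := by
    unfold Psum
    apply HasDerivAt.fun_sum
    intro i _
    simpa [div_eq_mul_inv, mul_comm, mul_assoc, mul_left_comm] using
      (hasDerivAt_pow i a).div_const (Nat.factorial i : ℝ)
  convert h using 1
  rw [Finset.sum_range_succ']
  simp only [Nat.cast_zero, zero_mul, zero_div, add_zero]
  unfold Psum
  apply Finset.sum_congr rfl
  intro i _
  rw [Nat.factorial_succ]
  push_cast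
  field_simp

lemma T1_eq (n : ℕ) (a : ℝ) :
    ∑ i ∈ range (n + 1), (i : ℝ) * (a ^ i / (Nat.factorial i : ℝ)) = a * Psum n a := by
  rw [Finset.sum_range_succ']
  simp only [Nat.cast_zero, zero_mul, add_zero]
  unfold Psum
  rw [Finset.mul_sum]
  apply Finset.sum_congr rfl
  intro i _
  rw [Nat.factorial_succ]
  push_cast
  field_simp
  ring

lemma T2_eq (n : ℕ) (a : ℝ) :
    ∑ i ∈ range (n + 2), (i : ℝ) ^ 2 * (a ^ i / (Nat.factorial i : ℝ)) =
      a * Psum (n + 1) a + a ^ 2 * Psum n a := by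
  rw [Finset.sum_range_succ']
  simp only [Nat.cast_zero, zero_pow, zero_mul, add_zero]
  have h : ∀ i ∈ range (n + 1), ((i : ℝ) + 1) ^ 2 * (a ^ (i + 1) / (Nat.factorial (i + 1) : ℝ))
      = a * (a ^ i / (Nat.factorial i : ℝ)) + a * ((i : ℝ) * (a ^ i / (Nat.factorial i : ℝ))) := by
    intro i _
    rw [Nat.factorial_succ]
    push_cast
    field_simp
    ring
  rw [Finset.sum_congr rfl (by intro i hi; push_cast; exact h i hi)]
  rw [Finset.sum_add_distrib, ← Finset.mul_sum, ← Finset.mul_sum, T1_eq]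
  unfold Psum
  ring

lemma variance_key (s : Finset ℕ) (w : ℕ → ℝ) (hw : ∀ i ∈ s, 0 < w i)
    (h0 : 0 ∈ s) (h1 : 1 ∈ s) :
    (∑ i ∈ s, (i : ℝ) * w i) ^ 2 < (∑ i ∈ s, (i : ℝ) ^ 2 * w i) * (∑ i ∈ s, w i) := by
  have key : (∑ p ∈ s ×ˢ s, ((p.1 : ℝ) - (p.2 : ℝ)) ^ 2 * (w p.1 * w p.2))
      = 2 * ((∑ i ∈ s, (i : ℝ) ^ 2 * w i) * (∑ i ∈ s, w i)
        - (∑ i ∈ s, (i : ℝ) * w i) ^ 2) := by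
    rw [Finset.sum_product]
    simp only [show ∀ (i j : ℕ), ((i : ℝ) - j) ^ 2 * (w i * w j)
        = ((i : ℝ) ^ 2 * w i) * w j + w i * ((j : ℝ) ^ 2 * w j)
          - (2 * ((i : ℝ) * w i)) * ((j : ℝ) * w j)
      from fun i j => by ring]
    simp only [Finset.sum_sub_distrib, Finset.sum_add_distrib, ← Finset.sum_mul,
      ← Finset.mul_sum]
    ring
  have hpos : 0 < ∑ p ∈ s ×ˢ s, ((p.1 : ℝ) - (p.2 : ℝ)) ^ 2 * (w p.1 * w p.2) := by
    apply Finset.sum_pos'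
    · intro p hp
      rw [Finset.mem_product] at hp
      have := hw p.1 hp.1
      have := hw p.2 hp.2
      positivity
    · refine ⟨(0, 1), Finset.mem_product.mpr ⟨h0, h1⟩, ?_⟩
      have := hw 0 h0
      have := hw 1 h1
      simp only [Nat.cast_zero, Nat.cast_one]
      nlinarith
  nlinarith [key, hpos]

lemma key_pos (m : ℕ) {a : ℝ} (ha : 0 < a) :
    0 < (Psum (m + 1) a + a * Psum m a) * Psum (m + 2) a
      - (a * Psum (m + 1) a) * Psum (m + 1) a := by
  have hv := variance_key (range (m + 2)) (fun i => a ^ i / (Nat.factorial i : ℝ))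
    (fun i _ => by positivity)
    (mem_range.mpr (by omega)) (mem_range.mpr (by omega))
  rw [T1_eq (m + 1) a, T2_eq m a] at hv
  have hT0 : (∑ i ∈ range (m + 2), a ^ i / (Nat.factorial i : ℝ)) = Psum (m + 2) a := rfl
  rw [hT0] at hv
  nlinarith [hv, ha]

noncomputable def erlH (m : ℕ) (a : ℝ) : ℝ := a * Psum (m + 1) a / Psum (m + 2) a

lemma hasDerivAt_erlH (m : ℕ) {a : ℝ} (ha : 0 ≤ a) :
    HasDerivAt (erlH m)
      (((Psum (m + 1) a + a * Psum m a) * Psum (m + 2) a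
        - (a * Psum (m + 1) a) * Psum (m + 1) a) / (Psum (m + 2) a) ^ 2) a := by
  have hnum : HasDerivAt (fun x : ℝ => x * Psum (m + 1) x)
      (Psum (m + 1) a + a * Psum m a) a := by
    have := (hasDerivAt_id' a).fun_mul (hasDerivAt_Psum m a)
    simpa using this
  have hden : HasDerivAt (fun x : ℝ => Psum (m + 2) x) (Psum (m + 1) a) a :=
    hasDerivAt_Psum (m + 1) a
  exact hnum.div hden (Psum_pos (m + 1) ha).ne'

lemma continuousOn_erlH (m : ℕ) : ContinuousOn (erlH m) (Set.Ici 0) := by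
  apply ContinuousOn.div
  · exact (continuous_id.mul (continuous_Psum (m + 1))).continuousOn
  · exact (continuous_Psum (m + 2)).continuousOn
  · intro x hx
    exact (Psum_pos (m + 1) hx).ne'

lemma strictMonoOn_erlH (m : ℕ) : StrictMonoOn (erlH m) (Set.Ici 0) := by
  apply strictMonoOn_of_deriv_pos (convex_Ici 0) (continuousOn_erlH m)
  intro x hx
  rw [interior_Ici] at hx
  rw [(hasDerivAt_erlH m (le_of_lt hx)).deriv]
  exact div_pos (key_pos m hx) (pow_pos (Psum_pos (m + 1) hx.le) 2)

lemma erlH_lb (m : ℕ) {A : ℝ} (hA : 0 < A) :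
    ((m : ℝ) + 1) * A / (((m : ℝ) + 1) + A) ≤ erlH m A := by
  set K : ℝ := (m : ℝ) + 1 with hK
  have hK0 : 0 < K := by positivity
  set P := Psum (m + 1) A with hP
  have hP0 : 0 < P := Psum_pos m hA.le
  have hterm : A ^ m / (Nat.factorial m : ℝ) ≤ P := by
    rw [hP]
    unfold Psum
    exact Finset.single_le_sum (f := fun i => A ^ i / (Nat.factorial i : ℝ))
      (fun i _ => by positivity) (mem_range.mpr (by omega))
  have hc : A ^ (m + 1) / (Nat.factorial (m + 1) : ℝ)
      = (A / K) * (A ^ m / (Nat.factorial m : ℝ)) := by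
    rw [Nat.factorial_succ, hK]
    push_cast
    have : (Nat.factorial m : ℝ) ≠ 0 := by positivity
    field_simp
    ring
  have hQ : Psum (m + 2) A ≤ P * (K + A) / K := by
    rw [Psum_succ (m + 1) A, hc]
    have h1 : (A / K) * (A ^ m / (Nat.factorial m : ℝ)) ≤ (A / K) * P :=
      mul_le_mul_of_nonneg_left hterm (by positivity)
    have : P + (A / K) * P = P * (K + A) / K := by field_simp
    linarith
  have hQ0 : 0 < Psum (m + 2) A := Psum_pos (m + 1) hA.le
  unfold erlH
  rw [div_le_div_iff₀ (by positivity) hQ0]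
  calc K * A * Psum (m + 2) A ≤ K * A * (P * (K + A) / K) := by
        exact mul_le_mul_of_nonneg_left hQ (by positivity)
    _ = A * P * (K + A) := by field_simp
    _ = A * Psum (m + 1) A * (K + A) := by rw [hP]

lemma eq_iff_erlH (m : ℕ) (μ lam y : ℝ) (hμ : 0 < μ) (hy : 0 < y) :
    (y - lam = ((y / μ) ^ (m + 1) / (Nat.factorial (m + 1) : ℝ)) /
        (∑ i ∈ range (m + 1 + 1), (y / μ) ^ i / (Nat.factorial i : ℝ)) * y)
    ↔ μ * erlH m (y / μ) = lam := by
  set a := y / μ with ha'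
  have ha : 0 < a := by positivity
  have hy' : y = μ * a := by rw [ha']; field_simp
  have hsum : (∑ i ∈ range (m + 1 + 1), a ^ i / (Nat.factorial i : ℝ)) = Psum (m + 2) a := rfl
  set Q := Psum (m + 2) a with hQdef
  set P := Psum (m + 1) a with hPdef
  set c := a ^ (m + 1) / (Nat.factorial (m + 1) : ℝ) with hcdef
  have hQ0 : 0 < Q := Psum_pos (m + 1) ha.le
  have hQc : Q = P + c := Psum_succ (m + 1) a
  rw [hsum]
  unfold erlH
  rw [div_mul_eq_mul_div, eq_div_iff hQ0.ne']
  have hre : μ * (a * P / Q) = μ * a * P / Q := by ring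
  rw [hre, div_eq_iff hQ0.ne']
  constructor
  · intro h
    linear_combination h - (Q - c) * hy' - (μ * a) * hQc
  · intro h
    linear_combination h + (Q - c) * hy' + (μ * a) * hQc

/-- In a symmetric network of `M/M/k/k` queues with exogenous arrival rate `λ`,
service rate `μ`, and `k` servers, subject to `0 < λ < μ k`, the conservation
equation `y − λ = π_k · y` (with `π_k` the Erlang blocking probability) has a
unique positive solution `y`; moreover this solution satisfies `y > λ`, so the
rejection rate `x = y − λ` is unique and positive. -/
theorem unique_total_arrival_rate_symmetric_network
    (k : ℕ) (hk : 0 < k) (μ lam : ℝ) (hμ : 0 < μ) (hlam : 0 < lam)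
    (hstab : lam < μ * k) :
    (∃! y : ℝ, 0 < y ∧
      y - lam = ((y / μ) ^ k / (Nat.factorial k : ℝ)) /
        (∑ i ∈ range (k + 1), (y / μ) ^ i / (Nat.factorial i : ℝ)) * y) ∧
    (∀ y : ℝ, 0 < y →
      y - lam = ((y / μ) ^ k / (Nat.factorial k : ℝ)) /
        (∑ i ∈ range (k + 1), (y / μ) ^ i / (Nat.factorial i : ℝ)) * y →
      lam < y) := by
  obtain ⟨m, rfl⟩ : ∃ m, k = m + 1 := ⟨k - 1, by omega⟩
  set K : ℝ := (m : ℝ) + 1 with hKdef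
  have hK0 : 0 < K := by positivity
  have hstab' : lam < μ * K := by
    rw [hKdef]
    push_cast at hstab ⊢
    linarith
  set r := lam / μ with hrdef
  have hr0 : 0 < r := by positivity
  have hrK : r < K := by
    rw [hrdef, div_lt_iff₀ hμ]
    linarith
  set A := (r * K + 1) / (K - r) with hAdef
  have hKr : 0 < K - r := by linarith
  have hA0 : 0 < A := by positivity
  have hAval : A * (K - r) = r * K + 1 := by
    rw [hAdef]; field_simp
  have hAr : r < erlH m A := by
    have hlb := erlH_lb m hA0
    have h2 : r < K * A / (K + A) := by
      rw [lt_div_iff₀ (by positivity)]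
      nlinarith [hAval]
    calc r < K * A / (K + A) := h2
      _ = ((m : ℝ) + 1) * A / (((m : ℝ) + 1) + A) := by rw [hKdef]
      _ ≤ erlH m A := hlb
  have h0 : erlH m 0 = 0 := by unfold erlH; simp
  have hcont : ContinuousOn (erlH m) (Set.Icc 0 A) :=
    (continuousOn_erlH m).mono (fun x hx => hx.1)
  obtain ⟨a, haI, har⟩ := intermediate_value_Icc hA0.le hcont
    (show r ∈ Set.Icc (erlH m 0) (erlH m A) from ⟨by rw [h0]; exact hr0.le, hAr.le⟩)
  have ha0 : 0 < a := by
    rcases lt_or_eq_of_le haI.1 with h | h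
    · exact h
    · exfalso
      rw [← h, h0] at har
      exact hr0.ne' har.symm
  have hya : μ * a / μ = a := by field_simp
  have hsol : μ * erlH m a = lam := by
    rw [har, hrdef]; field_simp
  constructor
  · refine ⟨μ * a, ⟨by positivity, ?_⟩, ?_⟩
    · rw [eq_iff_erlH m μ lam (μ * a) hμ (by positivity), hya]
      exact hsol
    · rintro z ⟨hz0, hzeq⟩
      rw [eq_iff_erlH m μ lam z hμ hz0] at hzeq
      have hza : erlH m (z / μ) = erlH m a := by
        have : μ * erlH m (z / μ) = μ * erlH m a := by rw [hzeq, hsol]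
        exact mul_left_cancel₀ hμ.ne' this
      have := (strictMonoOn_erlH m).injOn
        (Set.mem_Ici.mpr (by positivity : (0:ℝ) ≤ z / μ))
        (Set.mem_Ici.mpr ha0.le) hza
      field_simp at this
      rw [this]
  · intro y hy0 heq
    have hsum : (∑ i ∈ range (m + 1 + 1), (y / μ) ^ i / (Nat.factorial i : ℝ))
        = Psum (m + 2) (y / μ) := rfl
    have hQ0 : 0 < Psum (m + 2) (y / μ) := Psum_pos (m + 1) (by positivity)
    have hpos : 0 < ((y / μ) ^ (m + 1) / (Nat.factorial (m + 1) : ℝ)) /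
        (∑ i ∈ range (m + 1 + 1), (y / μ) ^ i / (Nat.factorial i : ℝ)) * y := by
      rw [hsum]
      have h1 : 0 < (y / μ) ^ (m + 1) / (Nat.factorial (m + 1) : ℝ) := by positivity
      exact mul_pos (div_pos h1 hQ0) hy0
    linarith [heq ▸ hpos]
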